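/- Let s ≥ 0 and α > 0 be real numbers. Define x* := ξ if (1+s)^2 > 4α, ξ > 0, and f(ξ) ≤ f(0); and x* := 0 otherwise. Then x* is a global minimizer of f on [0, ∞), i.e., f(x*) ≤ f(x) for all x ≥ 0. -/

import Mathlib

open scoped Classical

private lemma shrink_deriv (s α : ℝ) (f : ℝ → ℝ)
    (hf : ∀ x, f x = (1 / 2) * (x - s) ^ 2 + α * Real.log (1 + x))
    {x : ℝ} (hx : -1 < x) :
    HasDerivAt f ((x - s) + α * (1 / (1 + x))) x := by
  have h1x : 1 + x ≠ 0 := by linarith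
  have hfe : f = fun y => (1 / 2) * (y - s) ^ 2 + α * Real.log (1 + y) := funext hf
  rw [hfe]
  have h1 : HasDerivAt (fun y : ℝ => (1 / 2) * (y - s) ^ 2) (x - s) x := by
    have h := (((hasDerivAt_id x).sub_const s).pow 2).const_mul (1/2 : ℝ)
    refine h.congr_deriv ?_
    simp only [id_eq]
    ring
  have h2 : HasDerivAt (fun y : ℝ => Real.log (1 + y)) (1 / (1 + x)) x := by
    have h := (Real.hasDerivAt_log h1x).comp x ((hasDerivAt_id x).const_add 1)
    simpa [one_div, Function.comp_def] using h
  exact h1.add (h2.const_mul α)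

private lemma shrink_mono (s α : ℝ) (f : ℝ → ℝ)
    (hf : ∀ x, f x = (1 / 2) * (x - s) ^ 2 + α * Real.log (1 + x))
    {a b : ℝ} (ha : -1 < a) (hab : a ≤ b)
    (hq : ∀ y ∈ Set.Icc a b, 0 ≤ y ^ 2 + (1 - s) * y + (α - s)) :
    f a ≤ f b := by
  have key : MonotoneOn f (Set.Icc a b) := by
    apply monotoneOn_of_deriv_nonneg (convex_Icc a b)
    · intro y hy
      exact (shrink_deriv s α f hf (lt_of_lt_of_le ha hy.1)).continuousAt.continuousWithinAt
    · intro y hy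
      rw [interior_Icc] at hy
      exact (shrink_deriv s α f hf (lt_of_lt_of_le ha hy.1.le)).differentiableAt.differentiableWithinAt
    · intro y hy
      rw [interior_Icc] at hy
      have hy1 : -1 < y := lt_of_lt_of_le ha hy.1.le
      rw [(shrink_deriv s α f hf hy1).deriv]
      have h1y : (0:ℝ) < 1 + y := by linarith
      have hqy := hq y ⟨hy.1.le, hy.2.le⟩
      have heq : (y - s) + α * (1 / (1 + y)) = (y ^ 2 + (1 - s) * y + (α - s)) / (1 + y) := by
        field_simp; ring
      rw [heq]
      exact div_nonneg hqy h1y.le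
  exact key ⟨le_refl a, hab⟩ ⟨hab, le_refl b⟩ hab

private lemma shrink_anti (s α : ℝ) (f : ℝ → ℝ)
    (hf : ∀ x, f x = (1 / 2) * (x - s) ^ 2 + α * Real.log (1 + x))
    {a b : ℝ} (ha : -1 < a) (hab : a ≤ b)
    (hq : ∀ y ∈ Set.Icc a b, y ^ 2 + (1 - s) * y + (α - s) ≤ 0) :
    f b ≤ f a := by
  have key : AntitoneOn f (Set.Icc a b) := by
    apply antitoneOn_of_deriv_nonpos (convex_Icc a b)
    · intro y hy
      exact (shrink_deriv s α f hf (lt_of_lt_of_le ha hy.1)).continuousAt.continuousWithinAt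
    · intro y hy
      rw [interior_Icc] at hy
      exact (shrink_deriv s α f hf (lt_of_lt_of_le ha hy.1.le)).differentiableAt.differentiableWithinAt
    · intro y hy
      rw [interior_Icc] at hy
      have hy1 : -1 < y := lt_of_lt_of_le ha hy.1.le
      rw [(shrink_deriv s α f hf hy1).deriv]
      have h1y : (0:ℝ) < 1 + y := by linarith
      have hqy := hq y ⟨hy.1.le, hy.2.le⟩
      have heq : (y - s) + α * (1 / (1 + y)) = (y ^ 2 + (1 - s) * y + (α - s)) / (1 + y) := by
        field_simp; ring
      rw [heq]
      exact div_nonpos_of_nonpos_of_nonneg hqy h1y.le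
  exact key ⟨le_refl a, hab⟩ ⟨hab, le_refl b⟩ hab

/-- Scalar shrinkage rule: for `s ≥ 0`, `α > 0`,
`f(x) = (1/2)(x-s)² + α log(1+x)` and `ξ = (s-1)/2 + √((1+s)²/4 - α)`,
the point `x* = ξ` if `(1+s)² > 4α`, `ξ > 0` and `f(ξ) ≤ f(0)`, else `x* = 0`,
is a global minimizer of `f` on `[0, ∞)`. -/
theorem scalar_shrinkage_minimizer (s α : ℝ) (hs : 0 ≤ s) (hα : 0 < α)
    (f : ℝ → ℝ) (hf : ∀ x, f x = (1 / 2) * (x - s) ^ 2 + α * Real.log (1 + x))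
    (ξ : ℝ) (hξ : ξ = (s - 1) / 2 + Real.sqrt ((1 + s) ^ 2 / 4 - α))
    (xstar : ℝ)
    (hxstar : xstar = if (1 + s) ^ 2 > 4 * α ∧ 0 < ξ ∧ f ξ ≤ f 0 then ξ else 0) :
    ∀ x : ℝ, 0 ≤ x → f xstar ≤ f x := by
  intro x hx
  set r : ℝ := Real.sqrt ((1 + s) ^ 2 / 4 - α) with hr
  have hrnn : 0 ≤ r := Real.sqrt_nonneg _
  set ξ₂ : ℝ := (s - 1) / 2 - r with hξ₂
  by_cases hcond : (1 + s) ^ 2 > 4 * α ∧ 0 < ξ ∧ f ξ ≤ f 0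
  · obtain ⟨hD, hξpos, hfle⟩ := hcond
    have hr2 : r ^ 2 = (1 + s) ^ 2 / 4 - α := Real.sq_sqrt (by linarith)
    have hfact : ∀ y : ℝ, y ^ 2 + (1 - s) * y + (α - s) = (y - ξ) * (y - ξ₂) := by
      intro y
      rw [hξ, hξ₂]
      linear_combination hr2
    have hξ₂le : ξ₂ ≤ ξ := by rw [hξ, hξ₂]; linarith
    rw [hxstar, if_pos ⟨hD, hξpos, hfle⟩]
    rcases le_total ξ x with h | h
    · apply shrink_mono s α f hf (by linarith) h
      intro y hy
      rw [hfact]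
      have := hy.1
      nlinarith [hy.1, hy.2]
    · rcases le_total x ξ₂ with h2 | h2
      · calc f ξ ≤ f 0 := hfle
          _ ≤ f x := by
            apply shrink_mono s α f hf (by norm_num) hx
            intro y hy
            rw [hfact]
            nlinarith [hy.1, hy.2]
      · apply shrink_anti s α f hf (by linarith) h
        intro y hy
        rw [hfact]
        nlinarith [hy.1, hy.2]
  · rw [hxstar, if_neg hcond]
    push_neg at hcond
    by_cases hD : (1 + s) ^ 2 > 4 * α
    · have hr2 : r ^ 2 = (1 + s) ^ 2 / 4 - α := Real.sq_sqrt (by linarith)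
      have hfact : ∀ y : ℝ, y ^ 2 + (1 - s) * y + (α - s) = (y - ξ) * (y - ξ₂) := by
        intro y
        rw [hξ, hξ₂]
        linear_combination hr2
      have hξ₂le : ξ₂ ≤ ξ := by rw [hξ, hξ₂]; linarith
      by_cases hξpos : 0 < ξ
      · have hflt : f 0 < f ξ := hcond hD hξpos
        rcases le_total ξ x with h | h
        · have h1 : f ξ ≤ f x := by
            apply shrink_mono s α f hf (by linarith) h
            intro y hy
            rw [hfact]
            nlinarith [hy.1, hy.2]
          linarith
        · rcases le_total x ξ₂ with h2 | h2
          · apply shrink_mono s α f hf (by norm_num) hx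
            intro y hy
            rw [hfact]
            nlinarith [hy.1, hy.2]
          · have h1 : f ξ ≤ f x := by
              apply shrink_anti s α f hf (by linarith) h
              intro y hy
              rw [hfact]
              nlinarith [hy.1, hy.2]
            linarith
      · push_neg at hξpos
        apply shrink_mono s α f hf (by norm_num) hx
        intro y hy
        rw [hfact]
        nlinarith [hy.1, hy.2]
    · push_neg at hD
      apply shrink_mono s α f hf (by norm_num) hx
      intro y hy
      nlinarith [sq_nonneg (y + (1 - s) / 2), hy.1]
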